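/- Let $q \in \mathbb{C}^\times$, $n \ge 1$, and suppose $(X, Y, i, j)$ with $X, Y \in \mathrm{GL}_n(\mathbb{C})$, $i$ a column vector, $j$ a row vector, satisfies $qXY - YX + ij = 0$. If $g \in \mathrm{GL}_n(\mathbb{C})$ satisfies $gXg^{-1} = X$, $gYg^{-1} = Y$, $gi = i$ and $jg^{-1} = j$, and if moreover $q^m \ne 1$ for all $1 \le m \le n$, then $g = 1_n$; i.e., the $\mathrm{GL}_n(\mathbb{C})$-action on the space $\tilde{\mathcal{C}}_n^q$ is free. -/

import Mathlib

open Matrix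

theorem stmt_17 (n : ℕ) (hn : 1 ≤ n) (q : ℂ)
    (hq : ∀ m : ℕ, 1 ≤ m → m ≤ n → q ^ m ≠ 1)
    (X Y : Matrix (Fin n) (Fin n) ℂ) (hX : IsUnit X.det) (hY : IsUnit Y.det)
    (i : Matrix (Fin n) (Fin 1) ℂ) (j : Matrix (Fin 1) (Fin n) ℂ)
    (h : q • (X * Y) - Y * X + i * j = 0)
    (g : Matrix (Fin n) (Fin n) ℂ) (hg : IsUnit g.det)
    (hgX : g * X * g⁻¹ = X) (hgY : g * Y * g⁻¹ = Y)
    (hgi : g * i = i) (hgj : j * g⁻¹ = j) :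
    g = 1 := by
  classical
  -- the column of i
  set ic : Fin n → ℂ := fun k => i k 0 with hic
  -- words in X and Y
  let W : List Bool → Matrix (Fin n) (Fin n) ℂ :=
    fun w => (w.map fun b => if b then X else Y).prod
  -- the smallest X,Y-invariant subspace containing ic
  set U : Submodule ℂ (Fin n → ℂ) :=
    Submodule.span ℂ {v | ∃ w : List Bool, v = (W w).mulVec ic} with hU
  have hicU : ic ∈ U := Submodule.subset_span ⟨[], by simp [W]⟩
  have hXstab : ∀ v ∈ U, X.mulVec v ∈ U := by
    intro v hv
    have : U.map X.mulVecLin ≤ U := by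
      rw [hU, Submodule.map_span]
      apply Submodule.span_le.2
      rintro _ ⟨_, ⟨w, rfl⟩, rfl⟩
      exact Submodule.subset_span ⟨true :: w, by simp [W, Matrix.mulVec_mulVec]⟩
    exact this ⟨v, hv, rfl⟩
  have hYstab : ∀ v ∈ U, Y.mulVec v ∈ U := by
    intro v hv
    have : U.map Y.mulVecLin ≤ U := by
      rw [hU, Submodule.map_span]
      apply Submodule.span_le.2
      rintro _ ⟨_, ⟨w, rfl⟩, rfl⟩
      exact Submodule.subset_span ⟨false :: w, by simp [W, Matrix.mulVec_mulVec]⟩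
    exact this ⟨v, hv, rfl⟩
  -- (i*j).mulVec v is a multiple of ic, hence in U
  have hijU : ∀ v : Fin n → ℂ, (i * j).mulVec v ∈ U := by
    intro v
    have : (i * j).mulVec v = (j.mulVec v 0) • ic := by
      funext k
      simp only [Matrix.mulVec, Matrix.mul_apply, dotProduct, Pi.smul_apply,
        smul_eq_mul, hic]
      rw [Finset.sum_mul]
      refine Finset.sum_congr rfl fun x _ => ?_
      simp [Fin.sum_univ_one]
      ring
    rw [this]
    exact U.smul_mem _ hicU
  -- key relation on vectors
  have hrel : ∀ v : Fin n → ℂ, (Y * X).mulVec v - q • (X * Y).mulVec v ∈ U := by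
    intro v
    have h' : Y * X = q • (X * Y) + i * j := by
      have h2 := h
      rw [sub_add_eq_add_sub, sub_eq_zero] at h2
      exact h2.symm
    have : (Y * X).mulVec v - q • (X * Y).mulVec v = (i * j).mulVec v := by
      rw [h', Matrix.add_mulVec, Matrix.smul_mulVec]
      abel
    rw [this]
    exact hijU v
  -- U = ⊤
  have hUtop : U = ⊤ := by
    by_contra hne
    have hXc : U ≤ U.comap X.mulVecLin := fun v hv => hXstab v hv
    have hYc : U ≤ U.comap Y.mulVecLin := fun v hv => hYstab v hv
    set fX := U.mapQ U X.mulVecLin hXc with hfX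
    set fY := U.mapQ U Y.mulVecLin hYc with hfY
    -- the induced relation on the quotient
    have hqrel : fY ∘ₗ fX = q • (fX ∘ₗ fY) := by
      apply Submodule.linearMap_qext
      refine LinearMap.ext fun v => ?_
      simp only [LinearMap.comp_apply, Submodule.mkQ_apply, hfX, hfY, Submodule.mapQ_apply,
        LinearMap.smul_apply, Matrix.mulVecLin_apply]
      rw [← Submodule.Quotient.mk_smul, Submodule.Quotient.eq]
      have : Y.mulVec (X.mulVec v) - q • X.mulVec (Y.mulVec v)
          = (Y * X).mulVec v - q • (X * Y).mulVec v := by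
        simp [Matrix.mulVec_mulVec]
      rw [this]
      exact hrel v
    -- fX and fY are surjective, hence bijective
    have hsurjX : Function.Surjective fX := by
      have hs : Function.Surjective (X.mulVecLin) := by
        intro w
        exact ⟨X⁻¹.mulVec w, by
          simp [Matrix.mulVecLin_apply, Matrix.mulVec_mulVec, Matrix.mul_nonsing_inv X hX]⟩
      intro z
      obtain ⟨v, rfl⟩ := U.mkQ_surjective z
      obtain ⟨w, hw⟩ := hs v
      exact ⟨U.mkQ w, by simp [hfX, Submodule.mapQ_apply, hw]⟩
    have hsurjY : Function.Surjective fY := by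
      have hs : Function.Surjective (Y.mulVecLin) := by
        intro w
        exact ⟨Y⁻¹.mulVec w, by
          simp [Matrix.mulVecLin_apply, Matrix.mulVec_mulVec, Matrix.mul_nonsing_inv Y hY]⟩
      intro z
      obtain ⟨v, rfl⟩ := U.mkQ_surjective z
      obtain ⟨w, hw⟩ := hs v
      exact ⟨U.mkQ w, by simp [hfY, Submodule.mapQ_apply, hw]⟩
    have hinjX : Function.Injective fX :=
      (LinearMap.injective_iff_surjective).2 hsurjX
    have hinjY : Function.Injective fY :=
      (LinearMap.injective_iff_surjective).2 hsurjY
    have hdX : IsUnit (LinearMap.det fX) :=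
      (LinearEquiv.ofBijective fX ⟨hinjX, hsurjX⟩).isUnit_det'
    have hdY : IsUnit (LinearMap.det fY) :=
      (LinearEquiv.ofBijective fY ⟨hinjY, hsurjY⟩).isUnit_det'
    set m := Module.finrank ℂ ((Fin n → ℂ) ⧸ U) with hm
    have hdet : LinearMap.det (fY ∘ₗ fX) = q ^ m * LinearMap.det (fX ∘ₗ fY) := by
      rw [hqrel, LinearMap.det_smul]
    rw [LinearMap.det_comp, LinearMap.det_comp] at hdet
    have hne0 : LinearMap.det fX * LinearMap.det fY ≠ 0 :=
      mul_ne_zero hdX.ne_zero hdY.ne_zero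
    have hqm : q ^ m = 1 := by
      have hD : LinearMap.det fY * LinearMap.det fX ≠ 0 :=
        mul_ne_zero hdY.ne_zero hdX.ne_zero
      have h1 : (1 : ℂ) * (LinearMap.det fY * LinearMap.det fX)
          = q ^ m * (LinearMap.det fY * LinearMap.det fX) := by
        linear_combination hdet
      exact (mul_right_cancel₀ hD h1).symm
    -- bounds on m
    have hm1 : 1 ≤ m := by
      have : Nontrivial ((Fin n → ℂ) ⧸ U) :=
        Submodule.Quotient.nontrivial_iff.mpr hne
      exact Module.finrank_pos
    have hmn : m ≤ n := by
      have := Submodule.finrank_quotient_le U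
      simpa using this
    exact hq m hm1 hmn hqm
  -- g commutes with X and Y
  have hgX' : g * X = X * g := by
    have := congrArg (· * g) hgX
    simpa [Matrix.mul_assoc, Matrix.nonsing_inv_mul g hg] using this
  have hgY' : g * Y = Y * g := by
    have := congrArg (· * g) hgY
    simpa [Matrix.mul_assoc, Matrix.nonsing_inv_mul g hg] using this
  -- g commutes with any word
  have hgW : ∀ w : List Bool, g * W w = W w * g := by
    intro w
    induction w with
    | nil => simp [W]
    | cons b t ih =>
      have hA : g * (if b = true then X else Y) = (if b = true then X else Y) * g := by
        cases b
        · simpa using hgY'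
        · simpa using hgX'
      simp only [W, List.map_cons, List.prod_cons] at ih ⊢
      rw [← Matrix.mul_assoc, hA, Matrix.mul_assoc, ih, Matrix.mul_assoc]
  -- g fixes ic
  have hgic : g.mulVec ic = ic := by
    funext k
    have := congrFun (congrFun hgi k) 0
    simpa [Matrix.mul_apply, Matrix.mulVec, dotProduct, hic] using this
  -- the fixed space of g contains U = ⊤
  have hfix : ∀ v : Fin n → ℂ, g.mulVec v = v := by
    have hle : U ≤ LinearMap.eqLocus g.mulVecLin LinearMap.id := by
      rw [hU]
      apply Submodule.span_le.2
      rintro _ ⟨w, rfl⟩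
      show g.mulVec ((W w).mulVec ic) = (W w).mulVec ic
      rw [Matrix.mulVec_mulVec, hgW w, ← Matrix.mulVec_mulVec, hgic]
    intro v
    have : v ∈ LinearMap.eqLocus g.mulVecLin LinearMap.id := hle (hUtop ▸ Submodule.mem_top)
    simpa [Matrix.mulVecLin_apply] using this
  -- conclude g = 1
  have : Matrix.toLin' g = Matrix.toLin' (1 : Matrix (Fin n) (Fin n) ℂ) := by
    ext v
    simp [Matrix.toLin'_apply, hfix, Matrix.one_mulVec]
  exact Matrix.toLin'.injective this
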